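/- Let B be a set of positive integers that contains an arithmetic progression b₁ < b₂ < … < b_k with common difference Δ. Let u be a positive integer, and let A₁, …, A_ℓ be subsets of [0, u], each containing 0. Let η = max(A₁) + ⋯ + max(A_ℓ), and let S = B + A₁ + ⋯ + A_ℓ. If b_k − b₁ ≥ u − 1, then S contains a finite increasing sequence s₁ < s₂ < … < s_{k'} with s₁ = b₁, s_{k'} = b_k + η, and s_i − s_{i−1} ≤ Δ for every i ∈ [2, k']. -/

import Mathlib

open Pointwise Finset

lemma mem_finset_sum_pointwise {ι : Type*} (s : Finset ι) (t : ι → Finset ℕ) (f : ι → ℕ)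
    (h : ∀ i ∈ s, f i ∈ t i) : ∑ i ∈ s, f i ∈ ∑ i ∈ s, t i := by
  classical
  induction s using Finset.cons_induction with
  | empty => simp
  | cons a s ha ih =>
      rw [Finset.sum_cons, Finset.sum_cons]
      exact Finset.add_mem_add (h a (Finset.mem_cons_self a s))
        (ih fun i hi => h i (Finset.mem_cons_of_mem hi))

/-- **Extending an arithmetic progression.** Let `B` be a set of positive integers containing an
arithmetic progression `b₁ < … < b_k` with common difference `Δ`. Let `A₁, …, A_ℓ` be subsets of
`[0, u]`, each containing `0`, let `η = max(A₁) + ⋯ + max(A_ℓ)` and `S = B + A₁ + ⋯ + A_ℓ`.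
If `b_k − b₁ ≥ u − 1`, then `S` contains an increasing sequence `s₁ < ⋯ < s_{k'}` with
`s₁ = b₁`, `s_{k'} = b_k + η`, and consecutive differences at most `Δ`. -/
theorem stmt2 (u ℓ : ℕ) (hu : 0 < u)
    (A : Fin ℓ → Finset ℕ)
    (hA : ∀ i, A i ⊆ Finset.Icc 0 u)
    (h0 : ∀ i, 0 ∈ A i)
    (B : Set ℕ) (hBpos : ∀ b ∈ B, 0 < b)
    (k : ℕ) (hk : 0 < k) (b Δ : ℕ) (hΔ : 0 < Δ)
    (hAP : ∀ j < k, b + j * Δ ∈ B)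
    (η : ℕ) (hη : η = ∑ i, (A i).max' ⟨0, h0 i⟩)
    (hspan : u - 1 ≤ (k - 1) * Δ) :
    ∃ (k' : ℕ) (s : Fin (k' + 1) → ℕ),
      StrictMono s ∧
      s 0 = b ∧
      s (Fin.last k') = b + (k - 1) * Δ + η ∧
      (∀ i, s i ∈ B + (↑(∑ i, A i) : Set ℕ)) ∧
      (∀ i : Fin k', s i.succ - s i.castSucc ≤ Δ) := by
  classical
  set Mf : Fin ℓ → ℕ := fun i => (A i).max' ⟨0, h0 i⟩ with hMf
  have hMle : ∀ i, Mf i ≤ u := fun i =>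
    (Finset.mem_Icc.mp (hA i ((A i).max'_mem ⟨0, h0 i⟩))).2
  set m : ℕ → ℕ := fun t => ∑ i : Fin ℓ, if (i : ℕ) < t then Mf i else 0 with hm
  have hm0 : m 0 = 0 := by simp [hm]
  have hmℓ : m ℓ = η := by
    rw [hη]
    exact Finset.sum_congr rfl fun i _ => if_pos i.is_lt
  have hmle : ∀ t, m t ≤ η := by
    intro t
    rw [← hmℓ]
    refine Finset.sum_le_sum fun i _ => ?_
    rw [if_pos i.is_lt]
    split_ifs <;> simp
  have hmono : Monotone m := by
    intro a c hac
    exact Finset.sum_le_sum fun i _ => by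
      split_ifs with h1 h2
      · exact le_rfl
      · exact absurd (lt_of_lt_of_le h1 hac) h2
      all_goals simp
  have hstep : ∀ t (ht : t < ℓ), m (t + 1) = m t + Mf ⟨t, ht⟩ := by
    intro t ht
    have : ∀ i : Fin ℓ, (if (i : ℕ) < t + 1 then Mf i else 0) =
        (if (i : ℕ) < t then Mf i else 0) + (if i = ⟨t, ht⟩ then Mf i else 0) := by
      intro i
      rcases lt_trichotomy (i : ℕ) t with h1 | h1 | h1
      · rw [if_pos (Nat.lt_succ_of_lt h1), if_pos h1, if_neg (by
          intro he; rw [he] at h1; exact absurd h1 (lt_irrefl t)), add_zero]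
      · rw [if_pos (by omega), if_neg (by omega), if_pos (Fin.ext h1), zero_add]
      · rw [if_neg (by omega), if_neg (by omega), if_neg (by
          intro he; rw [he] at h1; simp at h1), add_zero]
    rw [hm]
    simp only []
    rw [Finset.sum_congr rfl fun i _ => this i, Finset.sum_add_distrib,
      Finset.sum_ite_eq' Finset.univ (⟨t, ht⟩ : Fin ℓ) Mf, if_pos (Finset.mem_univ _)]
  have hmemm : ∀ t, m t ∈ ∑ i, A i := by
    intro t
    exact mem_finset_sum_pointwise Finset.univ A _ fun i _ => by
      split_ifs with h1
      · exact (A i).max'_mem ⟨0, h0 i⟩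
      · exact h0 i
  -- the set of candidate points
  set T : Finset ℕ :=
    (Finset.range k ×ˢ Finset.range (ℓ + 1)).image (fun p => b + p.1 * Δ + m p.2) with hT
  have hmemT : ∀ j t, j < k → t ≤ ℓ → b + j * Δ + m t ∈ T := by
    intro j t hj ht
    rw [hT]
    exact Finset.mem_image.mpr ⟨⟨j, t⟩, Finset.mem_product.mpr
      ⟨Finset.mem_range.mpr hj, Finset.mem_range.mpr (Nat.lt_succ_of_le ht)⟩, rfl⟩
  have hbT : b ∈ T := by
    have := hmemT 0 0 hk (Nat.zero_le ℓ)
    simpa [hm0] using this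
  have htopT : b + (k - 1) * Δ + η ∈ T := by
    have := hmemT (k - 1) ℓ (by omega) le_rfl
    rwa [hmℓ] at this
  have hTform : ∀ x ∈ T, ∃ j t, j < k ∧ t ≤ ℓ ∧ x = b + j * Δ + m t := by
    intro x hx
    rw [hT] at hx
    obtain ⟨⟨j, t⟩, hp, he⟩ := Finset.mem_image.mp hx
    obtain ⟨h1, h2⟩ := Finset.mem_product.mp hp
    exact ⟨j, t, Finset.mem_range.mp h1, Nat.lt_succ_iff.mp (Finset.mem_range.mp h2), he.symm⟩
  have hub : ∀ x ∈ T, x ≤ b + (k - 1) * Δ + η := by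
    intro x hx
    obtain ⟨j, t, hj, ht, he⟩ := hTform x hx
    have h1 := hmle t
    have h2 : j * Δ ≤ (k - 1) * Δ := Nat.mul_le_mul_right Δ (by omega)
    omega
  have hlb : ∀ x ∈ T, b ≤ x := by
    intro x hx
    obtain ⟨j, t, hj, ht, he⟩ := hTform x hx
    omega
  have hTmem' : ∀ x ∈ T, x ∈ B + (↑(∑ i, A i) : Set ℕ) := by
    intro x hx
    obtain ⟨j, t, hj, ht, he⟩ := hTform x hx
    rw [he]
    exact Set.add_mem_add (hAP j hj) (hmemm t)
  -- the gap lemma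
  have hgap : ∀ x ∈ T, x < b + (k - 1) * Δ + η → ∃ z ∈ T, x < z ∧ z ≤ x + Δ := by
    intro x hx hlt
    obtain ⟨j, t, hj, ht, he⟩ := hTform x hx
    by_cases hjk : j + 1 < k
    · exact ⟨b + (j + 1) * Δ + m t, hmemT (j + 1) t hjk ht, by
        rw [he]; push_cast; nlinarith, by rw [he]; push_cast; nlinarith⟩
    · -- j = k - 1
      have hjeq : j = k - 1 := by omega
      have hmtη : m t < η := by rw [he, hjeq] at hlt; omega
      -- largest t' ≤ ℓ with m t' = m t
      set t' := Nat.findGreatest (fun s => m s = m t) ℓ with ht'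
      have ht'spec : m t' = m t :=
        Nat.findGreatest_spec (P := fun s => m s = m t) ht rfl
      have ht'le : t' ≤ ℓ := Nat.findGreatest_le ℓ
      have ht'lt : t' < ℓ := by
        rcases eq_or_lt_of_le ht'le with h1 | h1
        · exfalso; rw [h1, hmℓ] at ht'spec; omega
        · exact h1
      have hnext : m (t' + 1) ≠ m t :=
        Nat.findGreatest_is_greatest (P := fun s => m s = m t) (Nat.lt_succ_self t') ht'lt
      set M := Mf ⟨t', ht'lt⟩ with hMdef
      have hstep' : m (t' + 1) = m t + M := by rw [hstep t' ht'lt, ht'spec]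
      have hMpos : 0 < M := by
        rcases Nat.eq_zero_or_pos M with h1 | h1
        · exfalso; rw [h1, add_zero] at hstep'; exact hnext hstep'
        · exact h1
      have hMu : M ≤ u := hMle _
      have hMkΔ : M ≤ k * Δ := by
        have : (k - 1) * Δ + Δ = k * Δ := by
          have : k - 1 + 1 = k := by omega
          calc (k - 1) * Δ + Δ = (k - 1 + 1) * Δ := by ring
          _ = k * Δ := by rw [this]
        omega
      set j' := (k * Δ - M) / Δ with hj'
      have hj'le : j' * Δ ≤ k * Δ - M := Nat.div_mul_le_self _ _
      have hj'gt : k * Δ - M < (j' + 1) * Δ := by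
        have h1 := Nat.div_add_mod (k * Δ - M) Δ
        have h2 : (k * Δ - M) % Δ < Δ := Nat.mod_lt _ hΔ
        have h3 : (j' + 1) * Δ = Δ * ((k * Δ - M) / Δ) + Δ := by rw [hj']; ring
        omega
      have hj'k : j' < k := by
        by_contra hcon
        push_neg at hcon
        have : k * Δ ≤ j' * Δ := Nat.mul_le_mul_right Δ (by omega)
        omega
      refine ⟨b + j' * Δ + m (t' + 1), hmemT j' (t' + 1) hj'k ht'lt, ?_, ?_⟩
      · rw [he, hjeq, hstep']
        have h1 : (k - 1) * Δ + Δ = k * Δ := by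
          have hkk : k - 1 + 1 = k := by omega
          calc (k - 1) * Δ + Δ = (k - 1 + 1) * Δ := by ring
          _ = k * Δ := by rw [hkk]
        have : (j' + 1) * Δ = j' * Δ + Δ := by ring
        omega
      · rw [he, hjeq, hstep']
        have h1 : (k - 1) * Δ + Δ = k * Δ := by
          have hkk : k - 1 + 1 = k := by omega
          calc (k - 1) * Δ + Δ = (k - 1 + 1) * Δ := by ring
          _ = k * Δ := by rw [hkk]
        omega
  -- enumerate T
  have hTne : T.Nonempty := ⟨b, hbT⟩
  have hcardpos : 0 < T.card := Finset.card_pos.mpr hTne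
  set k' := T.card - 1 with hk'
  have hcard : T.card = k' + 1 := by omega
  set s : Fin (k' + 1) → ℕ := fun i => T.orderEmbOfFin hcard i with hs
  have hsmem : ∀ i, s i ∈ T := fun i => Finset.orderEmbOfFin_mem T hcard i
  have hsmono : StrictMono s := (T.orderEmbOfFin hcard).strictMono
  have hmin : T.min' hTne = b :=
    le_antisymm (Finset.min'_le T b hbT) (hlb _ (Finset.min'_mem T hTne))
  have hmax : T.max' hTne = b + (k - 1) * Δ + η :=
    le_antisymm (hub _ (Finset.max'_mem T hTne)) (Finset.le_max' T _ htopT)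
  have hs0 : s 0 = b := by
    show T.orderEmbOfFin hcard ⟨0, Nat.succ_pos k'⟩ = b
    exact (Finset.orderEmbOfFin_zero hcard (Nat.succ_pos k')).trans hmin
  have hslast : s (Fin.last k') = b + (k - 1) * Δ + η := by
    show T.orderEmbOfFin hcard ⟨k' + 1 - 1, Nat.sub_lt (Nat.succ_pos k') Nat.one_pos⟩
      = b + (k - 1) * Δ + η
    exact (Finset.orderEmbOfFin_last hcard (Nat.succ_pos k')).trans hmax
  refine ⟨k', s, hsmono, hs0, hslast, fun i => hTmem' _ (hsmem i), ?_⟩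
  intro i
  have hxlt : s i.castSucc < b + (k - 1) * Δ + η := by
    rw [← hslast]
    exact hsmono (lt_of_lt_of_le (Fin.castSucc_lt_succ : i.castSucc < i.succ) (Fin.le_last _))
  obtain ⟨z, hzT, hz1, hz2⟩ := hgap (s i.castSucc) (hsmem i.castSucc) hxlt
  have : z ∈ Set.range (T.orderEmbOfFin hcard) := by
    rw [Finset.range_orderEmbOfFin]; exact hzT
  obtain ⟨jz, hjz⟩ := this
  have hjz' : s jz = z := hjz
  have hij : i.castSucc < jz := by
    by_contra hcon
    push_neg at hcon
    have h5 : s jz ≤ s i.castSucc := hsmono.monotone hcon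
    omega
  have hsucc : s i.succ ≤ z := by
    rw [← hjz']
    exact hsmono.monotone (Fin.castSucc_lt_iff_succ_le.mp hij)
  omega
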